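/- Let G be a Hausdorff Boolean topological group whose underlying space is extremally disconnected. Then every countable closed linearly independent subset S of G contains at most one point that is not isolated in the subspace S; equivalently, for any two distinct points a, b ∈ S, at least one of a and b is isolated in the subspace S. -/

import Mathlib

open Set Topology

/-- In a regular space, two countable sets, each disjoint from the closure of the
other, can be separated by disjoint open sets. -/
lemma sep_countable_separated {X : Type*} [TopologicalSpace X] [RegularSpace X]
    {A B : Set X} (hA : A.Countable) (hB : B.Countable)
    (hAB : ∀ x ∈ A, x ∉ closure B) (hBA : ∀ x ∈ B, x ∉ closure A) :
    ∃ U V : Set X, IsOpen U ∧ IsOpen V ∧ A ⊆ U ∧ B ⊆ V ∧ U ∩ V = ∅ := by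
  rcases A.eq_empty_or_nonempty with hAe | hAne
  · exact ⟨∅, univ, isOpen_empty, isOpen_univ, by simp [hAe], by simp, by simp⟩
  rcases B.eq_empty_or_nonempty with hBe | hBne
  · exact ⟨univ, ∅, isOpen_univ, isOpen_empty, by simp, by simp [hBe], by simp⟩
  obtain ⟨f, hf⟩ := hA.exists_eq_range hAne
  obtain ⟨g, hg⟩ := hB.exists_eq_range hBne
  have hstep : ∀ (C : Set X) (x : X), x ∉ closure C →
      ∃ t, IsOpen t ∧ x ∈ t ∧ closure t ∩ closure C = ∅ := by
    intro C x hx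
    obtain ⟨t, ht, htc, hts⟩ := exists_mem_nhds_isClosed_subset
      ((isOpen_compl_iff.2 isClosed_closure).mem_nhds hx)
    refine ⟨interior t, isOpen_interior, mem_interior_iff_mem_nhds.2 ht, ?_⟩
    have hsub : closure (interior t) ⊆ t := htc.closure_subset_iff.2 interior_subset
    rw [eq_empty_iff_forall_notMem]
    rintro y ⟨hy1, hy2⟩
    exact hts (hsub hy1) hy2
  have hUex : ∀ n, ∃ t, IsOpen t ∧ f n ∈ t ∧ closure t ∩ closure B = ∅ :=
    fun n => hstep B (f n) (hAB _ (hf ▸ mem_range_self n))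
  have hVex : ∀ n, ∃ t, IsOpen t ∧ g n ∈ t ∧ closure t ∩ closure A = ∅ :=
    fun n => hstep A (g n) (hBA _ (hg ▸ mem_range_self n))
  choose U hUo hUm hUd using hUex
  choose V hVo hVm hVd using hVex
  set U' : ℕ → Set X := fun n => U n \ ⋃ m ∈ Iic n, closure (V m) with hU'def
  set V' : ℕ → Set X := fun n => V n \ ⋃ m ∈ Iic n, closure (U m) with hV'def
  have hU'o : ∀ n, IsOpen (U' n) := fun n =>
    (hUo n).sdiff ((finite_Iic n).isClosed_biUnion fun m _ => isClosed_closure)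
  have hV'o : ∀ n, IsOpen (V' n) := fun n =>
    (hVo n).sdiff ((finite_Iic n).isClosed_biUnion fun m _ => isClosed_closure)
  refine ⟨⋃ n, U' n, ⋃ n, V' n, isOpen_iUnion hU'o, isOpen_iUnion hV'o, ?_, ?_, ?_⟩
  · intro x hx
    obtain ⟨n, rfl⟩ := hf ▸ hx
    refine mem_iUnion.2 ⟨n, hUm n, ?_⟩
    simp only [mem_iUnion, not_exists]
    intro m _ hxm
    exact (eq_empty_iff_forall_notMem.1 (hVd m)) _
      ⟨hxm, subset_closure (hf ▸ mem_range_self n)⟩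
  · intro x hx
    obtain ⟨n, rfl⟩ := hg ▸ hx
    refine mem_iUnion.2 ⟨n, hVm n, ?_⟩
    simp only [mem_iUnion, not_exists]
    intro m _ hxm
    exact (eq_empty_iff_forall_notMem.1 (hUd m)) _
      ⟨hxm, subset_closure (hg ▸ mem_range_self n)⟩
  · rw [eq_empty_iff_forall_notMem]
    rintro x ⟨hxU, hxV⟩
    obtain ⟨n, hxU⟩ := mem_iUnion.1 hxU
    obtain ⟨m, hxV⟩ := mem_iUnion.1 hxV
    rcases le_total m n with h | h
    · exact hxU.2 (mem_biUnion h (subset_closure hxV.1))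
    · exact hxV.2 (mem_biUnion h (subset_closure hxU.1))

/-- In an extremally disconnected space, disjoint open sets have disjoint closures. -/
lemma ed_closure_disjoint {X : Type*} [TopologicalSpace X] [ExtremallyDisconnected X]
    {U V : Set X} (hU : IsOpen U) (hV : IsOpen V) (h : U ∩ V = ∅) :
    closure U ∩ closure V = ∅ := by
  have hd : Disjoint U V := disjoint_iff_inter_eq_empty.2 h
  have h1 : Disjoint (closure U) V := hd.closure_left hV
  have h2 : Disjoint (closure U) (closure V) :=
    h1.closure_right (ExtremallyDisconnected.open_closure U hU)
  exact disjoint_iff_inter_eq_empty.1 h2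

/-- In an extremally disconnected Hausdorff Boolean topological group, every
countable closed linearly independent subset contains at most one point that is
not isolated in it: for any two distinct points of the set, at least one is isolated. -/
theorem stmt3 {G : Type*} [AddCommGroup G] [TopologicalSpace G] [IsTopologicalAddGroup G]
    [T2Space G] [ExtremallyDisconnected G] (hbool : ∀ g : G, g + g = 0)
    (S : Set G) (hScnt : S.Countable) (hScl : IsClosed S)
    (hind : ∀ t : Finset G, ↑t ⊆ S → t.Nonempty → ∑ x ∈ t, x ≠ 0) :
    ∀ a ∈ S, ∀ b ∈ S, a ≠ b →
      (∃ U : Set G, IsOpen U ∧ U ∩ S = {a}) ∨ (∃ U : Set G, IsOpen U ∧ U ∩ S = {b}) := by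
  classical
  intro a ha b hb hab
  by_contra hcon
  push_neg at hcon
  obtain ⟨hna, hnb⟩ := hcon
  set c := a + b with hc
  have hc0 : c ≠ 0 := by
    intro h
    apply hab
    have : a + (a + b) = a + 0 := by rw [← hc, h]
    rwa [← add_assoc, hbool, zero_add, add_zero, eq_comm] at this
  -- x + c cancels
  have hcc : ∀ x : G, x + c + c = x := by
    intro x
    rw [add_assoc, hbool, add_zero]
  have hacb : a + c = b := by rw [hc, ← add_assoc, hbool, zero_add]
  have hbca : b + c = a := by rw [hc, add_comm a b, ← add_assoc, hbool, zero_add]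
  -- key independence consequence
  have key : ∀ x ∈ S, x ≠ a → x ≠ b → x + c ∉ S := by
    intro x hx hxa hxb hxc
    have hxxc : x ≠ x + c := by
      intro h
      exact hc0 (by rw [left_eq_add] at h; exact h)
    have hxca : x + c ≠ a := by
      intro h
      apply hxb
      rw [← hcc x, h, hacb]
    have hxcb : x + c ≠ b := by
      intro h
      apply hxa
      rw [← hcc x, h, hbca]
    have hsum : (∑ y ∈ ({x, x + c, a, b} : Finset G), y) = 0 := by
      rw [Finset.sum_insert (by simp [hxxc, hxa, hxb]),
          Finset.sum_insert (by simp [hxca, hxcb]),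
          Finset.sum_insert (by simp [hab]), Finset.sum_singleton]
      show x + (x + (a + b) + (a + b)) = 0
      have h : x + (x + (a + b) + (a + b)) = (x + x) + ((a + b) + (a + b)) := by abel
      rw [h, hbool, hbool, add_zero]
    refine hind {x, x + c, a, b} ?_ ⟨x, by simp⟩ hsum
    intro y hy
    simp only [Finset.coe_insert, Finset.coe_singleton, mem_insert_iff, mem_singleton_iff] at hy
    rcases hy with rfl | rfl | rfl | rfl
    exacts [hx, hxc, ha, hb]
  -- both a and b are in the closure of A := S \ {a, b}
  set A : Set G := S \ {a, b} with hAdef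
  have hmemcl : ∀ p q : G, p ∈ S → p ≠ q → ({p, q} : Set G) = {a, b} →
      (∀ U : Set G, IsOpen U → U ∩ S ≠ {p}) → p ∈ closure A := by
    intro p q hp hpq hpqab hiso
    rw [mem_closure_iff]
    intro O hO hpO
    have hU : IsOpen (O \ {q}) := hO.sdiff isClosed_singleton
    by_contra hemp
    rw [not_nonempty_iff_eq_empty] at hemp
    apply hiso _ hU
    apply Subset.antisymm
    · rintro x ⟨⟨hxO, hxq⟩, hxS⟩
      simp only [mem_singleton_iff] at hxq ⊢
      by_contra hxp
      have : x ∈ O ∩ A := by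
        refine ⟨hxO, hxS, ?_⟩
        rw [← hpqab]
        simp only [mem_insert_iff, mem_singleton_iff]
        tauto
      rw [hemp] at this
      exact this
    · rintro x rfl
      exact ⟨⟨hpO, by simp [hpq]⟩, hp⟩
  have haA : a ∈ closure A :=
    hmemcl a b ha hab rfl hna
  have hbA : b ∈ closure A :=
    hmemcl b a hb hab.symm (by rw [pair_comm]) hnb
  -- B := A + c
  set B : Set G := (· + c) '' A with hBdef
  have hAcnt : A.Countable := hScnt.mono diff_subset
  have hBcnt : B.Countable := hAcnt.image _
  have hScc : IsClosed ((· + c) '' S) := (Homeomorph.addRight c).isClosedMap S hScl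
  -- S ∩ (S + c) ⊆ {a, b}
  have hSScap : ∀ x, x ∈ S → x ∈ (· + c) '' S → x = a ∨ x = b := by
    rintro x hx ⟨y, hy, rfl⟩
    by_contra h
    push_neg at h
    exact key _ hx h.1 h.2 (by rw [hcc]; exact hy)
  have hclA : closure A ⊆ S := closure_minimal diff_subset hScl
  have hclB : closure B ⊆ (· + c) '' S :=
    closure_minimal (image_mono diff_subset) hScc
  have hAB : ∀ x ∈ A, x ∉ closure B := by
    intro x hx hxc
    rcases hSScap x hx.1 (hclB hxc) with rfl | rfl
    · exact hx.2 (by simp)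
    · exact hx.2 (by simp)
  have hBA : ∀ x ∈ B, x ∉ closure A := by
    rintro x ⟨y, hy, rfl⟩ hxc
    rcases hSScap (y + c) (hclA hxc) ⟨y, hy.1, rfl⟩ with h | h
    · apply hy.2
      have : y = b := by rw [← hcc y, h, hacb]
      simp [this]
    · apply hy.2
      have : y = a := by rw [← hcc y, h, hbca]
      simp [this]
  -- a ∈ closure B
  have haB : a ∈ closure B := by
    have : a ∈ ⇑(Homeomorph.addRight c) '' closure A := ⟨b, hbA, hbca⟩
    rw [Homeomorph.image_closure] at this
    have him : ⇑(Homeomorph.addRight c) '' A = B := rfl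
    rwa [him] at this
  -- separate and derive contradiction
  obtain ⟨U, V, hUopen, hVo, hAU, hBV, hUV⟩ := sep_countable_separated hAcnt hBcnt hAB hBA
  have hclos := ed_closure_disjoint hUopen hVo hUV
  have : a ∈ closure U ∩ closure V :=
    ⟨closure_mono hAU haA, closure_mono hBV haB⟩
  rw [hclos] at this
  exact this
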